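/- arXiv:1307.5537 — 4 statements merged into one kernel-verified Lean document; each statement's English description precedes it below -/
import Mathlib

section
/- Let H be a harmonic function on ℝ² (i.e. ΔH = 0 everywhere) such that ∂H/∂x₂ ≥ 0 everywhere on ℝ². Then H is an affine function: there exist constants a, b, c ∈ ℝ such that H(x₁, x₂) = a x₁ + b x₂ + c for all (x₁, x₂) ∈ ℝ². -/
/-- The Laplacian of `f : ℝ² → ℝ`, as the sum of the second partial derivatives. -/
noncomputable def lapl (f : EuclideanSpace ℝ (Fin 2) → ℝ) (x : EuclideanSpace ℝ (Fin 2)) : ℝ :=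
  ∑ i, fderiv ℝ (fun y => fderiv ℝ f y (EuclideanSpace.single i 1)) x (EuclideanSpace.single i 1)

open Complex ContinuousLinearMap

noncomputable def psi : ℂ →L[ℝ] EuclideanSpace ℝ (Fin 2) :=
  (Complex.reCLM.smulRight ((EuclideanSpace.single 0 1 : EuclideanSpace ℝ (Fin 2)))) +
  (Complex.imCLM.smulRight ((EuclideanSpace.single 1 1 : EuclideanSpace ℝ (Fin 2))))

lemma psi_one : psi 1 = EuclideanSpace.single 0 1 := by simp [psi]
lemma psi_I : psi I = EuclideanSpace.single 1 1 := by simp [psi]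
lemma psi_surj (x : EuclideanSpace ℝ (Fin 2)) : psi (x 0 + x 1 * I) = x := by
  simp [psi]
  ext i
  fin_cases i <;> simp [EuclideanSpace.single_apply]

lemma decomp (v : EuclideanSpace ℝ (Fin 2)) :
    v = v 0 • EuclideanSpace.single 0 1 + v 1 • EuclideanSpace.single 1 1 := by
  ext i; fin_cases i <;> simp [EuclideanSpace.single_apply]

lemma hasFDerivAt_eval {H : EuclideanSpace ℝ (Fin 2) → ℝ} (hH : ContDiff ℝ 2 H)
    (v x : EuclideanSpace ℝ (Fin 2)) :
    HasFDerivAt (fun y => fderiv ℝ H y v)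
      ((ContinuousLinearMap.apply ℝ ℝ v).comp (fderiv ℝ (fderiv ℝ H) x)) x := by
  have h1 : ContDiff ℝ 1 (fderiv ℝ H) := hH.fderiv_right (le_refl 2)
  exact ((ContinuousLinearMap.apply ℝ ℝ v).hasFDerivAt).comp x
    (h1.differentiable one_ne_zero x).hasFDerivAt

/-- A harmonic function on `ℝ²` with `∂H/∂x₂ ≥ 0` everywhere is affine:
`H(x₁, x₂) = a x₁ + b x₂ + c`. -/
theorem harmonic_monotone_affine
    (H : EuclideanSpace ℝ (Fin 2) → ℝ)
    (hH : ContDiff ℝ 2 H) (hharm : ∀ x, lapl H x = 0)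
    (hmon : ∀ x, 0 ≤ fderiv ℝ H x (EuclideanSpace.single 1 1)) :
    ∃ a b c : ℝ, ∀ x : EuclideanSpace ℝ (Fin 2), H x = a * x 0 + b * x 1 + c := by
  set e0 : EuclideanSpace ℝ (Fin 2) := EuclideanSpace.single 0 1 with he0
  set e1 : EuclideanSpace ℝ (Fin 2) := EuclideanSpace.single 1 1 with he1
  set A : EuclideanSpace ℝ (Fin 2) → _ := fderiv ℝ (fderiv ℝ H) with hA
  have hdH : Differentiable ℝ (fderiv ℝ H) :=
    (hH.fderiv_right (m := 1) (le_refl 2)).differentiable one_ne_zero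
  -- symmetry of second derivative
  have hsymm : ∀ x v w, A x v w = A x w v := fun x v w =>
    second_derivative_symmetric (f' := fderiv ℝ H)
      (fun y => (hH.differentiable (by norm_num) y).hasFDerivAt)
      (hdH x).hasFDerivAt v w
  -- harmonicity in terms of A
  have hharm' : ∀ x, A x e0 e0 + A x e1 e1 = 0 := by
    intro x
    have h := hharm x
    rw [lapl, Fin.sum_univ_two, (hasFDerivAt_eval hH _ x).fderiv,
      (hasFDerivAt_eval hH _ x).fderiv] at h
    simpa using h
  -- the complex function f = H_x - i H_y ∘ psi
  set f : ℂ → ℂ := fun z => (fderiv ℝ H (psi z) e0 : ℂ) - I * (fderiv ℝ H (psi z) e1) with hf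
  -- real derivative of f
  have hfd : ∀ z : ℂ, HasFDerivAt f
      ((Complex.ofRealCLM.comp (((ContinuousLinearMap.apply ℝ ℝ e0).comp (A (psi z))).comp psi))
        - I • (Complex.ofRealCLM.comp
            (((ContinuousLinearMap.apply ℝ ℝ e1).comp (A (psi z))).comp psi))) z := by
    intro z
    have h0 : HasFDerivAt (fun z' : ℂ => ((fderiv ℝ H (psi z') e0 : ℝ) : ℂ))
        (Complex.ofRealCLM.comp (((ContinuousLinearMap.apply ℝ ℝ e0).comp (A (psi z))).comp psi))
        z :=
      Complex.ofRealCLM.hasFDerivAt.comp z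
        (((hasFDerivAt_eval hH e0 (psi z))).comp z psi.hasFDerivAt)
    have h1 : HasFDerivAt (fun z' : ℂ => ((fderiv ℝ H (psi z') e1 : ℝ) : ℂ))
        (Complex.ofRealCLM.comp (((ContinuousLinearMap.apply ℝ ℝ e1).comp (A (psi z))).comp psi))
        z :=
      Complex.ofRealCLM.hasFDerivAt.comp z
        (((hasFDerivAt_eval hH e1 (psi z))).comp z psi.hasFDerivAt)
    exact h0.sub (h1.const_mul I)
  -- complex differentiability: the derivative is complex-linear
  have key : ∀ z : ℂ, HasDerivAt f ((A (psi z) e0 e0 : ℂ) - I * (A (psi z) e0 e1)) z := by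
    intro z
    set c : ℂ := (A (psi z) e0 e0 : ℂ) - I * (A (psi z) e0 e1) with hc
    have hL := hfd z
    set L := ((Complex.ofRealCLM.comp
        (((ContinuousLinearMap.apply ℝ ℝ e0).comp (A (psi z))).comp psi))
        - I • (Complex.ofRealCLM.comp
            (((ContinuousLinearMap.apply ℝ ℝ e1).comp (A (psi z))).comp psi))) with hLdef
    have hL1 : L 1 = c := by
      simp [hLdef, hc, psi_one, ← he0]
    have hLI : L I = I * c := by
      have h1 : A (psi z) e1 e0 = A (psi z) e0 e1 := hsymm _ _ _
      have h2 : A (psi z) e1 e1 = -(A (psi z) e0 e0) := by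
        have := hharm' (psi z); linarith
      simp only [hLdef, hc, ContinuousLinearMap.sub_apply, ContinuousLinearMap.smul_apply,
        ContinuousLinearMap.comp_apply, psi_I, ← he1, Complex.ofRealCLM_apply, smul_eq_mul,
        ContinuousLinearMap.apply_apply, h1, h2]
      push_cast
      rw [mul_sub]
      rw [show I * (I * ((((A (psi z)) e0) e1 : ℝ) : ℂ)) = - ((((A (psi z)) e0) e1 : ℝ) : ℂ) by
        rw [← mul_assoc, Complex.I_mul_I]; ring]
      ring
    have heq : ((1 : ℂ →L[ℂ] ℂ).smulRight c).restrictScalars ℝ = L := by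
      refine ContinuousLinearMap.ext fun w => ?_
      have hw : w = w.re • (1:ℂ) + w.im • I := by
        rw [Complex.real_smul, Complex.real_smul, mul_one]; exact (Complex.re_add_im w).symm
      calc (((1 : ℂ →L[ℂ] ℂ).smulRight c).restrictScalars ℝ) w = w * c := by
            simp [smul_eq_mul]
        _ = (w.re • (1:ℂ) + w.im • I) * c := by rw [← hw]
        _ = w.re • ((1:ℂ) * c) + w.im • (I * c) := by
            simp only [Complex.real_smul]; ring
        _ = w.re • L 1 + w.im • L I := by rw [hL1, hLI, one_mul]
        _ = L (w.re • (1:ℂ) + w.im • I) := by rw [map_add, map_smul, map_smul]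
        _ = L w := by rw [← hw]
    have hfc : HasFDerivAt f ((1 : ℂ →L[ℂ] ℂ).smulRight c) z :=
      hasFDerivAt_of_restrictScalars (𝕜 := ℝ) hL heq
    simpa using hfc.hasDerivAt
  have hdiff : Differentiable ℂ f := fun z => (key z).differentiableAt
  -- the auxiliary bounded entire function
  set g : ℂ → ℂ := fun z => Complex.exp (-(I * f z)) with hg
  have hgdiff : Differentiable ℂ g := (((differentiable_const I).mul hdiff).neg).cexp
  have hgb : ∀ z, ‖g z‖ ≤ 1 := by
    intro z
    have him : (f z).im ≤ 0 := by
      have := hmon (psi z)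
      simp only [hf]
      simp [Complex.sub_im, Complex.mul_im]
      linarith
    rw [hg]
    simp only [Complex.norm_exp]
    rw [Real.exp_le_one_iff]
    simp only [Complex.neg_re, Complex.mul_re, Complex.I_re, Complex.I_im]
    simpa using him
  have hgconst : ∀ z, g z = g 0 := fun z =>
    hgdiff.apply_eq_apply_of_bounded
      (Metric.isBounded_range_iff.mpr ⟨2, fun a b => by
        calc dist (g a) (g b) ≤ ‖g a‖ + ‖g b‖ := dist_le_norm_add_norm _ _
          _ ≤ 2 := by linarith [hgb a, hgb b]⟩) z 0
  -- the complex derivative vanishes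
  have hceq : ∀ z, (A (psi z) e0 e0 : ℂ) - I * (A (psi z) e0 e1) = 0 := by
    intro z
    have h1 : HasDerivAt g (Complex.exp (-(I * f z)) *
        (-(I * ((A (psi z) e0 e0 : ℂ) - I * (A (psi z) e0 e1))))) z :=
      (((key z).const_mul I).neg).cexp
    have h2 : HasDerivAt g 0 z := by
      have : g = fun _ => g 0 := funext hgconst
      rw [this]
      exact hasDerivAt_const z (g 0)
    have h3 := h1.unique h2
    rcases mul_eq_zero.1 h3 with h | h
    · exact absurd h (Complex.exp_ne_zero _)
    · have := neg_eq_zero.1 h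
      rcases mul_eq_zero.1 this with h' | h'
      · exact absurd h' Complex.I_ne_zero
      · exact h'
  -- vanishing of all second partials
  have hB : ∀ (B : EuclideanSpace ℝ (Fin 2) →L[ℝ] ℝ), B e0 = 0 → B e1 = 0 →
      ∀ w, B w = 0 := by
    intro B h0 h1 w
    have h : B (w 0 • e0 + w 1 • e1) = 0 := by simp [h0, h1]
    rwa [← decomp w] at h
  have hA0 : ∀ x, A x = 0 := by
    intro x
    have hz := hceq (x 0 + x 1 * I)
    rw [psi_surj] at hz
    have h00 : A x e0 e0 = 0 := by
      have := congrArg Complex.re hz; simpa using this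
    have h01 : A x e0 e1 = 0 := by
      have := congrArg Complex.im hz; simpa using this
    have h10 : A x e1 e0 = 0 := by rw [hsymm]; exact h01
    have h11 : A x e1 e1 = 0 := by have := hharm' x; linarith
    refine ContinuousLinearMap.ext fun v => ContinuousLinearMap.ext fun w => ?_
    have hv0 : ∀ w', A x e0 w' = 0 := hB _ h00 h01
    have hv1 : ∀ w', A x e1 w' = 0 := hB _ h10 h11
    have : ((ContinuousLinearMap.apply ℝ ℝ w).comp (A x)) v = 0 :=
      hB _ (by simpa using hv0 w) (by simpa using hv1 w) v
    simpa using this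
  -- the gradient is constant
  have hgrad : ∀ x, fderiv ℝ H x = fderiv ℝ H 0 := fun x =>
    is_const_of_fderiv_eq_zero hdH hA0 x 0
  set l := fderiv ℝ H 0 with hl
  refine ⟨l e0, l e1, H 0, fun x => ?_⟩
  have hsub : ∀ y, HasFDerivAt (fun y => H y - l y) (0 : EuclideanSpace ℝ (Fin 2) →L[ℝ] ℝ) y := by
    intro y
    have := (hH.differentiable (by norm_num) y).hasFDerivAt.sub l.hasFDerivAt
    rwa [hgrad y, sub_self] at this
  have hCc : H x - l x = H 0 - l 0 :=
    is_const_of_fderiv_eq_zero (𝕜 := ℝ) (fun y => (hsub y).differentiableAt)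
      (fun y => (hsub y).fderiv) x 0
  have hlx : l x = l e0 * x 0 + l e1 * x 1 := by
    have h : l (x 0 • e0 + x 1 • e1) = l e0 * x 0 + l e1 * x 1 := by
      rw [map_add, map_smul, map_smul]; simp [mul_comm]
    rwa [← decomp x] at h
  rw [map_zero] at hCc
  rw [← hlx]
  linarith
end

section
/- The function H : ℝ² → ℝ defined by H(x, y) = e^y sin(x) is harmonic on ℝ² (ΔH = 0 everywhere), is not an affine function, and its positive part H⁺ is nondecreasing with respect to y, i.e. for every x ∈ ℝ and every s ≤ t one has H⁺(x, s) ≤ H⁺(x, t). -/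
/-- The Laplacian of `f : ℝ × ℝ → ℝ`, as the sum of the second partial derivatives. -/
noncomputable def lap2 (f : ℝ × ℝ → ℝ) (z : ℝ × ℝ) : ℝ :=
  fderiv ℝ (fun w => fderiv ℝ f w (1, 0)) z (1, 0) +
    fderiv ℝ (fun w => fderiv ℝ f w (0, 1)) z (0, 1)

open Real ContinuousLinearMap in
lemma expMul_hasFDerivAt (g g' : ℝ → ℝ) (hg : ∀ x, HasDerivAt g (g' x) x) (w : ℝ × ℝ) :
    HasFDerivAt (fun p : ℝ × ℝ => Real.exp p.2 * g p.1)
      ((Real.exp w.2 * g' w.1) • (fst ℝ ℝ ℝ) + (Real.exp w.2 * g w.1) • (snd ℝ ℝ ℝ)) w := by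
  have h1 : HasFDerivAt (fun p : ℝ × ℝ => Real.exp p.2)
      (Real.exp w.2 • (snd ℝ ℝ ℝ)) w :=
    (Real.hasDerivAt_exp w.2).comp_hasFDerivAt w (hasFDerivAt_snd)
  have h2 : HasFDerivAt (fun p : ℝ × ℝ => g p.1) (g' w.1 • (fst ℝ ℝ ℝ)) w :=
    (hg w.1).comp_hasFDerivAt w (hasFDerivAt_fst)
  have := h1.mul h2
  apply this.congr_fderiv
  ext <;> simp <;> ring

open Real ContinuousLinearMap in
lemma fderiv_expMul (g g' : ℝ → ℝ) (hg : ∀ x, HasDerivAt g (g' x) x) (w : ℝ × ℝ) :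
    fderiv ℝ (fun p : ℝ × ℝ => Real.exp p.2 * g p.1) w =
      (Real.exp w.2 * g' w.1) • (fst ℝ ℝ ℝ) + (Real.exp w.2 * g w.1) • (snd ℝ ℝ ℝ) :=
  (expMul_hasFDerivAt g g' hg w).fderiv

/-- **Remark 3.4.** The function `H(x, y) = e^y sin x` is harmonic on `ℝ²`, is not
affine, and its positive part `H⁺` is nondecreasing with respect to `y`. -/
theorem exp_sin_harmonic_not_affine_positive_part_monotone :
    (∀ z : ℝ × ℝ, lap2 (fun w => Real.exp w.2 * Real.sin w.1) z = 0) ∧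
    (¬ ∃ a b c : ℝ, ∀ z : ℝ × ℝ, Real.exp z.2 * Real.sin z.1 = a * z.1 + b * z.2 + c) ∧
    (∀ (x s t : ℝ), s ≤ t →
      max (Real.exp s * Real.sin x) 0 ≤ max (Real.exp t * Real.sin x) 0) := by
  refine ⟨?_, ?_, ?_⟩
  · intro z
    have hsin := fderiv_expMul Real.sin Real.cos Real.hasDerivAt_sin
    have hcos := fderiv_expMul Real.cos (fun x => -Real.sin x) Real.hasDerivAt_cos
    unfold lap2
    have e1 : (fun w : ℝ × ℝ => fderiv ℝ (fun w : ℝ × ℝ => Real.exp w.2 * Real.sin w.1) w (1, 0))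
        = fun w : ℝ × ℝ => Real.exp w.2 * Real.cos w.1 := by
      funext w; rw [hsin w]; simp
    have e2 : (fun w : ℝ × ℝ => fderiv ℝ (fun w : ℝ × ℝ => Real.exp w.2 * Real.sin w.1) w (0, 1))
        = fun w : ℝ × ℝ => Real.exp w.2 * Real.sin w.1 := by
      funext w; rw [hsin w]; simp
    rw [e1, e2, hcos z, hsin z]
    simp
  · rintro ⟨a, b, c, h⟩
    have h0 := h (0, 0)
    have h1 := h (Real.pi, 0)
    have h2 := h (Real.pi / 2, 0)
    simp [Real.sin_pi, Real.sin_pi_div_two] at h0 h1 h2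
    have hpi := Real.pi_ne_zero
    nlinarith [Real.pi_pos]
  · intro x s t hst
    rcases le_total (Real.sin x) 0 with h | h
    · have hs : Real.exp s * Real.sin x ≤ 0 :=
        mul_nonpos_of_nonneg_of_nonpos (Real.exp_pos s).le h
      exact max_le (hs.trans (le_max_right _ _)) (le_max_right _ _)
    · have : Real.exp s * Real.sin x ≤ Real.exp t * Real.sin x :=
        mul_le_mul_of_nonneg_right (Real.exp_le_exp.2 hst) h
      exact max_le_max this le_rfl
end

section
/- Let u, v be C² functions on ℝ² with u > 0 and v > 0 everywhere, satisfying Δv = v u² on ℝ² and the linear growth bound v(x) ≤ C₀(1 + |x|) for all x ∈ ℝ² (for some constant C₀ > 0). Then there exists a constant C > 0 such that ∫_{B_r(0)} |∇v|² dx ≤ C r² for all r > 0. -/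
open MeasureTheory Metric

section Aux
open Set

local notation "E2" => EuclideanSpace ℝ (Fin 2)

/-- The `i`-th partial derivative. -/
noncomputable def pd (f : EuclideanSpace ℝ (Fin 2) → ℝ) (i : Fin 2)
    (x : EuclideanSpace ℝ (Fin 2)) : ℝ :=
  fderiv ℝ f x (EuclideanSpace.single i 1)

lemma coord_le_norm (x : E2) (i : Fin 2) : |x i| ≤ ‖x‖ := by
  have h1 : |x i| ^ 2 ≤ ∑ j, ‖x j‖ ^ 2 := by
    have := Finset.single_le_sum (f := fun j => ‖x j‖ ^ 2)
      (fun j _ => by positivity) (Finset.mem_univ i)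
    simpa [Real.norm_eq_abs] using this
  calc |x i| = Real.sqrt (|x i| ^ 2) := by rw [Real.sqrt_sq (abs_nonneg _)]
    _ ≤ ‖x‖ := by rw [EuclideanSpace.norm_eq]; exact Real.sqrt_le_sqrt h1

lemma norm_sq_eq_sum (x : E2) : ‖x‖ ^ 2 = ∑ i, (x i) ^ 2 := by
  rw [EuclideanSpace.norm_eq, Real.sq_sqrt (by positivity)]
  simp [Real.norm_eq_abs, sq_abs]

lemma inner_gradient_eq (v : E2 → ℝ) (x w : E2) :
    (inner ℝ (gradient v x) w : ℝ) = fderiv ℝ v x w := by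
  simp [gradient, InnerProductSpace.toDual_symm_apply]

lemma gradient_coord (v : E2 → ℝ) (x : E2) (i : Fin 2) :
    gradient v x i = pd v i x := by
  rw [show pd v i x = fderiv ℝ v x (EuclideanSpace.single i 1) from rfl, ← inner_gradient_eq]
  rw [EuclideanSpace.inner_single_right]
  simp

lemma gradient_norm_sq (v : E2 → ℝ) (x : E2) :
    ‖gradient v x‖ ^ 2 = ∑ i, (pd v i x) ^ 2 := by
  rw [norm_sq_eq_sum]
  exact Finset.sum_congr rfl fun i _ => by rw [gradient_coord]

lemma pd_continuous (f : E2 → ℝ) (hf : ContDiff ℝ 1 f) (i : Fin 2) :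
    Continuous (pd f i) :=
  (hf.continuous_fderiv one_ne_zero).clm_apply continuous_const

lemma pd_contDiff (f : E2 → ℝ) (hf : ContDiff ℝ 2 f) (i : Fin 2) :
    ContDiff ℝ 1 (pd f i) :=
  (hf.fderiv_right (by norm_num)).clm_apply contDiff_const

lemma pd_mul (f g : E2 → ℝ) (x : E2) (hf : DifferentiableAt ℝ f x)
    (hg : DifferentiableAt ℝ g x) (i : Fin 2) :
    pd (fun y => f y * g y) i x = f x * pd g i x + g x * pd f i x := by
  unfold pd
  rw [fderiv_fun_mul hf hg]
  simp

lemma fderiv_zero_of_nmem (f : E2 → ℝ) (x : E2) (hx : x ∉ tsupport f) :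
    fderiv ℝ f x = 0 := by
  by_contra h
  exact hx (support_fderiv_subset (𝕜 := ℝ) (by simpa [Function.mem_support] using h))

lemma pd_zero_of_nmem (f : E2 → ℝ) (i : Fin 2) (x : E2) (hx : x ∉ tsupport f) :
    pd f i x = 0 := by
  unfold pd
  rw [fderiv_zero_of_nmem f x hx]
  rfl

lemma pd_hasCompactSupport (f : E2 → ℝ) (hfs : HasCompactSupport f) (i : Fin 2) :
    HasCompactSupport (pd f i) :=
  HasCompactSupport.intro hfs fun x hx => pd_zero_of_nmem f i x hx

lemma integral_fderiv_single (g : E2 → ℝ) (hg : ContDiff ℝ 1 g)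
    (h2g : HasCompactSupport g) (i : Fin 2) :
    ∫ x, pd g i x = 0 := by
  classical
  obtain ⟨R₀, hR₀⟩ := (h2g.isBounded).subset_ball 0
  set R := max R₀ 1 with hRdef
  have hR : (0:ℝ) < R := lt_of_lt_of_le one_pos (le_max_right _ _)
  have hsupp : tsupport g ⊆ ball (0:E2) R :=
    hR₀.trans (ball_subset_ball (le_max_left _ _))
  set L := EuclideanSpace.equiv (Fin 2) ℝ with hLdef
  set F : (Fin 2 → ℝ) → ℝ :=
    fun y => fderiv ℝ g (L.symm y) (EuclideanSpace.single i 1) with hF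
  have hgvanish : ∀ z : E2, R ≤ ‖z‖ → g z = 0 := by
    intro z hz
    apply image_eq_zero_of_notMem_tsupport
    intro hzmem
    exact absurd (hsupp hzmem) (by simp [not_lt.2 hz] : z ∉ ball (0:E2) R)
  have hfvanish : ∀ z : E2, R ≤ ‖z‖ → fderiv ℝ g z = 0 := by
    intro z hz
    apply fderiv_zero_of_nmem
    intro hzmem
    exact absurd (hsupp hzmem) (by simp [not_lt.2 hz] : z ∉ ball (0:E2) R)
  have hLsymm : ∀ y : Fin 2 → ℝ, ∀ j, (L.symm y) j = y j := fun y j => rfl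
  have hnorm_ge : ∀ y : Fin 2 → ℝ, ∀ j, |y j| ≤ ‖L.symm y‖ := by
    intro y j
    have := coord_le_norm (L.symm y) j
    rwa [hLsymm y j] at this
  have step1 : ∫ x, pd g i x = ∫ y, F y := by
    rw [← (EuclideanSpace.volume_preserving_symm_measurableEquiv_toLp (Fin 2)).integral_comp
      (MeasurableEquiv.toLp 2 (Fin 2 → ℝ)).symm.measurableEmbedding F]
    congr 1
  set a : Fin 2 → ℝ := fun _ => -R with ha
  set b : Fin 2 → ℝ := fun _ => R with hb
  have step2 : ∫ y, F y = ∫ y in Icc a b, F y := by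
    refine (setIntegral_eq_integral_of_forall_compl_eq_zero ?_).symm
    intro y hy
    have hex : ∃ j, R < |y j| := by
      by_contra h
      push_neg at h
      exact hy ⟨fun j => neg_le_of_abs_le (h j), fun j => le_of_abs_le (h j)⟩
    obtain ⟨j, hj⟩ := hex
    have : R ≤ ‖L.symm y‖ := le_trans hj.le (hnorm_ge y j)
    simp [hF, hfvanish _ this]
  set f : Fin 2 → (Fin 2 → ℝ) → ℝ := fun j y => if j = i then g (L.symm y) else 0 with hf
  set f' : Fin 2 → (Fin 2 → ℝ) → ((Fin 2 → ℝ) →L[ℝ] ℝ) := fun j y =>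
    if j = i then (fderiv ℝ g (L.symm y)).comp
      (L.symm : (Fin 2 → ℝ) →L[ℝ] E2) else 0 with hf'
  have hLsingle : (L.symm : (Fin 2 → ℝ) →L[ℝ] E2) (Pi.single i 1)
      = EuclideanSpace.single i 1 := rfl
  have hdiv : ∀ y, (∑ j, f' j y (Pi.single j 1)) = F y := by
    intro y
    rw [Finset.sum_eq_single i]
    · simp only [hf', if_pos rfl, ContinuousLinearMap.comp_apply, hLsingle, hF]
    · intro j _ hj
      simp [hf', hj]
    · intro h; exact absurd (Finset.mem_univ i) h
  have hFc : Continuous F := by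
    rw [hF]
    exact ((hg.continuous_fderiv one_ne_zero).comp L.symm.continuous).clm_apply continuous_const
  have hable : a ≤ b := fun j => by
    simp only [ha, hb]; linarith
  have Hc : ∀ j, ContinuousOn (f j) (Icc a b) := by
    intro j
    by_cases hj : j = i
    · subst hj
      simp only [hf, eq_self_iff_true, if_true]
      exact ((hg.continuous).comp L.symm.continuous).continuousOn
    · simp only [hf, if_neg hj]
      exact continuousOn_const
  have Hd : ∀ x ∈ (Set.pi univ fun j => Ioo (a j) (b j)) \ (∅ : Set (Fin 2 → ℝ)),
      ∀ j, HasFDerivAt (f j) (f' j x) x := by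
    intro x _ j
    by_cases hj : j = i
    · subst hj
      simp only [hf, hf', eq_self_iff_true, if_true]
      exact ((hg.differentiable one_ne_zero (L.symm x)).hasFDerivAt).comp x L.symm.hasFDerivAt
    · simp only [hf, hf', if_neg hj]
      exact hasFDerivAt_const 0 x
  have Hi : IntegrableOn (fun y => ∑ j, f' j y (Pi.single j 1)) (Icc a b) := by
    have : (fun y => ∑ j, f' j y (Pi.single j 1)) = F := funext hdiv
    rw [this]
    exact hFc.continuousOn.integrableOn_compact isCompact_Icc
  have key := MeasureTheory.integral_divergence_of_hasFDerivAt_off_countable'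
    a b hable f f' ∅ countable_empty Hc Hd Hi
  have faces : ∀ j : Fin 2,
      ((∫ x in Icc (a ∘ j.succAbove) (b ∘ j.succAbove), f j (j.insertNth (b j) x)) -
        ∫ x in Icc (a ∘ j.succAbove) (b ∘ j.succAbove), f j (j.insertNth (a j) x)) = 0 := by
    intro j
    by_cases hj : j = i
    · subst hj
      have h1 : ∀ x : Fin 1 → ℝ, f j (j.insertNth (b j) x) = 0 := by
        intro x
        simp only [hf, eq_self_iff_true, if_true]
        apply hgvanish
        have h2 := hnorm_ge (j.insertNth (b j) x) j
        rw [Fin.insertNth_apply_same] at h2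
        simpa [hb, abs_of_pos hR] using h2
      have h2 : ∀ x : Fin 1 → ℝ, f j (j.insertNth (a j) x) = 0 := by
        intro x
        simp only [hf, eq_self_iff_true, if_true]
        apply hgvanish
        have h2 := hnorm_ge (j.insertNth (a j) x) j
        rw [Fin.insertNth_apply_same] at h2
        simpa [ha, abs_of_pos hR] using h2
      simp only [h1, h2, integral_zero, sub_self]
    · simp [hf, hj]
  rw [step1, step2, ← funext hdiv, key]
  exact Finset.sum_eq_zero fun j _ => faces j

lemma ibp (φ v : E2 → ℝ) (hφ : ContDiff ℝ 1 φ) (hφs : HasCompactSupport φ)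
    (hv : ContDiff ℝ 2 v) :
    ∫ x, ((∑ i, pd φ i x * pd v i x) + φ x * (∑ i, pd (pd v i) i x)) = 0 := by
  have hg : ∀ i : Fin 2, ContDiff ℝ 1 (fun x => φ x * pd v i x) :=
    fun i => hφ.mul (pd_contDiff v hv i)
  have hgs : ∀ i : Fin 2, HasCompactSupport (fun x => φ x * pd v i x) := by
    intro i
    apply HasCompactSupport.intro hφs
    intro x hx
    simp [image_eq_zero_of_notMem_tsupport hx]
  have hTi : ∀ (i : Fin 2) x, pd (fun y => φ y * pd v i y) i x
      = pd φ i x * pd v i x + φ x * pd (pd v i) i x := by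
    intro i x
    rw [pd_mul φ (pd v i) x (hφ.differentiable one_ne_zero x)
      ((pd_contDiff v hv i).differentiable one_ne_zero x)]
    ring
  have hIi : ∀ i : Fin 2, ∫ x, pd (fun y => φ y * pd v i y) i x = 0 := fun i =>
    integral_fderiv_single _ (hg i) (hgs i) i
  have hint : ∀ i : Fin 2, Integrable (fun x => pd (fun y => φ y * pd v i y) i x) := by
    intro i
    exact (pd_continuous _ (hg i) i).integrable_of_hasCompactSupport
      (pd_hasCompactSupport _ (hgs i) i)
  have hrw : (fun x => (∑ i, pd φ i x * pd v i x) + φ x * (∑ i, pd (pd v i) i x))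
      = fun x => ∑ i : Fin 2, pd (fun y => φ y * pd v i y) i x := by
    funext x
    simp only [hTi]
    rw [Finset.sum_add_distrib, Finset.mul_sum]
  rw [hrw, integral_finset_sum _ (fun i _ => hint i)]
  exact Finset.sum_eq_zero fun i _ => hIi i

lemma caccioppoli (v : E2 → ℝ) (hv : ContDiff ℝ 2 v)
    (hlap : ∀ x, 0 ≤ v x * (∑ i, pd (pd v i) i x))
    (χ : E2 → ℝ) (hχ : ContDiff ℝ 1 χ) (hχs : HasCompactSupport χ) :
    ∫ x, (χ x) ^ 2 * (∑ i, (pd v i x) ^ 2) ≤ 4 * ∫ x, (v x) ^ 2 * (∑ i, (pd χ i x) ^ 2) := by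
  have hv1 : ContDiff ℝ 1 v := hv.of_le one_le_two
  set φ : E2 → ℝ := fun x => χ x * (χ x * v x) with hφdef
  have hφ : ContDiff ℝ 1 φ := hχ.mul (hχ.mul hv1)
  have hφs : HasCompactSupport φ := HasCompactSupport.intro hχs fun x hx => by
    simp [hφdef, image_eq_zero_of_notMem_tsupport hx]
  have hpdφ : ∀ (i : Fin 2) (x : E2), pd φ i x
      = (χ x) ^ 2 * pd v i x + 2 * χ x * v x * pd χ i x := by
    intro i x
    rw [hφdef]
    rw [pd_mul χ (fun y => χ y * v y) x (hχ.differentiable one_ne_zero x)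
      ((hχ.mul hv1).differentiable one_ne_zero x) i]
    rw [pd_mul χ v x (hχ.differentiable one_ne_zero x) (hv1.differentiable one_ne_zero x) i]
    ring
  have h0 := ibp φ v hφ hφs hv
  set P : E2 → ℝ := fun x => (χ x) ^ 2 * (∑ i, (pd v i x) ^ 2) with hP
  set Q : E2 → ℝ := fun x => 2 * χ x * v x * (∑ i, pd χ i x * pd v i x) with hQ
  set Z : E2 → ℝ := fun x => (χ x) ^ 2 * (v x * (∑ i, pd (pd v i) i x)) with hZ
  set W : E2 → ℝ := fun x => (v x) ^ 2 * (∑ i, (pd χ i x) ^ 2) with hW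
  have hrw : (fun x => (∑ i, pd φ i x * pd v i x) + φ x * (∑ i, pd (pd v i) i x))
      = fun x => P x + Q x + Z x := by
    funext x
    simp only [hpdφ]
    simp only [hP, hQ, hZ, hφdef, Fin.sum_univ_two]
    ring
  rw [hrw] at h0
  have hvc : Continuous v := hv1.continuous
  have hχc : Continuous χ := hχ.continuous
  have hpdvc : ∀ i : Fin 2, Continuous (pd v i) := fun i => pd_continuous v hv1 i
  have hpdχc : ∀ i : Fin 2, Continuous (pd χ i) := fun i => pd_continuous χ hχ i
  have hpd2c : ∀ i : Fin 2, Continuous (pd (pd v i) i) :=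
    fun i => pd_continuous _ (pd_contDiff v hv i) i
  have hPc : Continuous P := (hχc.pow 2).mul
    (continuous_finset_sum _ fun i _ => (hpdvc i).pow 2)
  have hQc : Continuous Q := ((continuous_const.mul hχc).mul hvc).mul
    (continuous_finset_sum _ fun i _ => (hpdχc i).mul (hpdvc i))
  have hZc : Continuous Z := (hχc.pow 2).mul
    (hvc.mul (continuous_finset_sum _ fun i _ => hpd2c i))
  have hWc : Continuous W := (hvc.pow 2).mul
    (continuous_finset_sum _ fun i _ => (hpdχc i).pow 2)
  have hPs : HasCompactSupport P := HasCompactSupport.intro hχs fun x hx => by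
    simp [hP, image_eq_zero_of_notMem_tsupport hx]
  have hQs : HasCompactSupport Q := HasCompactSupport.intro hχs fun x hx => by
    simp [hQ, image_eq_zero_of_notMem_tsupport hx]
  have hZs : HasCompactSupport Z := HasCompactSupport.intro hχs fun x hx => by
    simp [hZ, image_eq_zero_of_notMem_tsupport hx]
  have hWs : HasCompactSupport W := HasCompactSupport.intro hχs fun x hx => by
    have : ∀ i : Fin 2, pd χ i x = 0 := fun i => pd_zero_of_nmem χ i x hx
    simp [hW, this]
  have hPi : Integrable P := hPc.integrable_of_hasCompactSupport hPs
  have hQi : Integrable Q := hQc.integrable_of_hasCompactSupport hQs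
  have hZi : Integrable Z := hZc.integrable_of_hasCompactSupport hZs
  have hWi : Integrable W := hWc.integrable_of_hasCompactSupport hWs
  have hsplit : (∫ x, P x) + (∫ x, Q x) + (∫ x, Z x) = 0 := by
    rw [integral_add (f := fun x => P x + Q x) (g := Z) (hPi.add hQi) hZi,
      integral_add hPi hQi] at h0
    exact h0
  have hZnn : 0 ≤ ∫ x, Z x := integral_nonneg fun x =>
    mul_nonneg (sq_nonneg _) (hlap x)
  have hptw : ∀ x, -Q x ≤ (1/2 : ℝ) * P x + 2 * W x := by
    intro x
    simp only [hP, hQ, hW, Fin.sum_univ_two]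
    nlinarith [sq_nonneg (χ x * pd v 0 x + 2 * v x * pd χ 0 x),
      sq_nonneg (χ x * pd v 1 x + 2 * v x * pd χ 1 x)]
  have hmono : ∫ x, -Q x ≤ ∫ x, ((1/2 : ℝ) * P x + 2 * W x) :=
    integral_mono hQi.neg ((hPi.const_mul _).add (hWi.const_mul _)) hptw
  rw [integral_neg] at hmono
  rw [integral_add (hPi.const_mul _) (hWi.const_mul _), integral_const_mul,
    integral_const_mul] at hmono
  linarith

end Aux

set_option maxHeartbeats 2000000 in
/-- If `u, v ∈ C²(ℝ²)` are positive, `Δv = v u²`, and `v` has linear growth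
`v(x) ≤ C₀ (1 + |x|)`, then `∫_{B_r(0)} |∇v|² ≤ C r²` for all `r > 0`. -/
theorem gradient_square_quadratic_bound
    (u v : EuclideanSpace ℝ (Fin 2) → ℝ)
    (hu : ContDiff ℝ 2 u) (hv : ContDiff ℝ 2 v)
    (hupos : ∀ x, 0 < u x) (hvpos : ∀ x, 0 < v x)
    (heqv : ∀ x, lapl v x = v x * (u x) ^ 2)
    (C₀ : ℝ) (hC₀ : 0 < C₀)
    (hgrowth : ∀ x, v x ≤ C₀ * (1 + ‖x‖)) :
    ∃ C > (0 : ℝ), ∀ r > (0 : ℝ),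
      ∫ x in ball (0 : EuclideanSpace ℝ (Fin 2)) r, ‖gradient v x‖ ^ 2 ≤ C * r ^ 2 := by
  have hv1 : ContDiff ℝ 1 v := hv.of_le one_le_two
  have hlap : ∀ x, 0 ≤ v x * (∑ i, pd (pd v i) i x) := by
    intro x
    have hl : (∑ i, pd (pd v i) i x) = lapl v x := rfl
    rw [hl, heqv x]
    exact mul_nonneg (hvpos x).le (mul_nonneg (hvpos x).le (sq_nonneg _))
  set β : ContDiffBump (0 : EuclideanSpace ℝ (Fin 2)) := ⟨1, 2, one_pos, one_lt_two⟩ with hβdef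
  have hβ1 : ContDiff ℝ 1 ⇑β := β.contDiff
  obtain ⟨y₀, hy₀⟩ := ((hβ1.continuous_fderiv one_ne_zero).norm).exists_forall_ge_of_hasCompactSupport
    ((β.hasCompactSupport.fderiv (𝕜 := ℝ)).norm)
  set M : ℝ := ‖fderiv ℝ (⇑β) y₀‖ with hMdef
  have hM0 : 0 ≤ M := norm_nonneg _
  have hsumc : Continuous fun x : EuclideanSpace ℝ (Fin 2) => ∑ i, (pd v i x) ^ 2 :=
    continuous_finset_sum _ fun i _ => (pd_continuous v hv1 i).pow 2
  obtain ⟨S, hS⟩ := (isCompact_closedBall (0 : EuclideanSpace ℝ (Fin 2)) 1).exists_bound_of_continuousOn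
    hsumc.continuousOn
  have hSnn : 0 ≤ S := le_trans (norm_nonneg _) (hS 0 (mem_closedBall_self zero_le_one))
  set B1c : ℝ := (volume (closedBall (0 : EuclideanSpace ℝ (Fin 2)) 1)).toReal with hB1c
  set B1b : ℝ := (volume (ball (0 : EuclideanSpace ℝ (Fin 2)) 1)).toReal with hB1b
  have hB1cnn : 0 ≤ B1c := ENNReal.toReal_nonneg
  have hB1bnn : 0 ≤ B1b := ENNReal.toReal_nonneg
  have hCpos : (0:ℝ) < 288 * M ^ 2 * C₀ ^ 2 * B1c + S * B1b + 1 := by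
    have c1 : (0:ℝ) ≤ 288 * M ^ 2 * C₀ ^ 2 * B1c := by positivity
    have c2 : (0:ℝ) ≤ S * B1b := mul_nonneg hSnn hB1bnn
    linarith
  refine ⟨288 * M ^ 2 * C₀ ^ 2 * B1c + S * B1b + 1, hCpos, ?_⟩
  intro r hr
  simp only [gradient_norm_sq]
  rcases le_or_gt 1 r with h1r | h1r
  · -- large radius : Caccioppoli
    set χ : EuclideanSpace ℝ (Fin 2) → ℝ := fun x => β (r⁻¹ • x) with hχdef
    have hχ : ContDiff ℝ 1 χ := hβ1.comp (contDiff_const_smul r⁻¹)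
    have hχzero : ∀ x : EuclideanSpace ℝ (Fin 2),
        x ∉ closedBall (0 : EuclideanSpace ℝ (Fin 2)) (2*r) → χ x = 0 := by
      intro x hx
      have hxn : 2*r < ‖x‖ := by simpa [mem_closedBall_zero_iff, not_le] using hx
      apply β.zero_of_le_dist
      have h2 : dist (r⁻¹ • x) (0 : EuclideanSpace ℝ (Fin 2)) = r⁻¹ * ‖x‖ := by
        rw [dist_zero_right, norm_smul, Real.norm_eq_abs, abs_of_pos (inv_pos.2 hr)]
      rw [show β.rOut = 2 from rfl, h2, inv_mul_eq_div, le_div_iff₀ hr]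
      linarith
    have htsupp : tsupport χ ⊆ closedBall (0 : EuclideanSpace ℝ (Fin 2)) (2*r) := by
      apply closure_minimal _ Metric.isClosed_closedBall
      intro x hx
      by_contra hmem
      exact hx (hχzero x hmem)
    have hχs : HasCompactSupport χ :=
      HasCompactSupport.intro (isCompact_closedBall _ _) hχzero
    have hχ1 : ∀ x ∈ ball (0 : EuclideanSpace ℝ (Fin 2)) r, χ x = 1 := by
      intro x hx
      apply β.one_of_mem_closedBall
      have hxn : ‖x‖ < r := mem_ball_zero_iff.1 hx
      have : ‖r⁻¹ • x‖ ≤ 1 := by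
        rw [norm_smul, Real.norm_eq_abs, abs_of_pos (inv_pos.2 hr), inv_mul_eq_div,
          div_le_one hr]
        linarith
      simpa [mem_closedBall_zero_iff, show β.rIn = 1 from rfl] using this
    have hpdχ : ∀ (i : Fin 2) (x : EuclideanSpace ℝ (Fin 2)), |pd χ i x| ≤ M / r := by
      intro i x
      have h1 : HasFDerivAt (⇑β) (fderiv ℝ (⇑β) (r⁻¹ • x)) (r⁻¹ • x) :=
        ((hβ1.differentiable one_ne_zero) _).hasFDerivAt
      have h2 : HasFDerivAt (fun y : EuclideanSpace ℝ (Fin 2) => r⁻¹ • y)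
          ((r⁻¹ : ℝ) • ContinuousLinearMap.id ℝ (EuclideanSpace ℝ (Fin 2))) x :=
        (hasFDerivAt_id x).const_smul r⁻¹
      have h3 : HasFDerivAt χ ((fderiv ℝ (⇑β) (r⁻¹ • x)).comp
          ((r⁻¹ : ℝ) • ContinuousLinearMap.id ℝ (EuclideanSpace ℝ (Fin 2)))) x := h1.comp x h2
      have h4 : pd χ i x = r⁻¹ * fderiv ℝ (⇑β) (r⁻¹ • x) (EuclideanSpace.single i 1) := by
        rw [show pd χ i x = fderiv ℝ χ x (EuclideanSpace.single i 1) from rfl, h3.fderiv]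
        simp
      have h5 : |fderiv ℝ (⇑β) (r⁻¹ • x) (EuclideanSpace.single i 1)| ≤ M := by
        have := (fderiv ℝ (⇑β) (r⁻¹ • x)).le_opNorm (EuclideanSpace.single i (1:ℝ))
        rw [EuclideanSpace.norm_single, norm_one, mul_one] at this
        exact le_trans this (hy₀ _)
      rw [h4, abs_mul, abs_of_pos (inv_pos.2 hr), div_eq_inv_mul]
      exact mul_le_mul_of_nonneg_left h5 (inv_pos.2 hr).le
    have hcac := caccioppoli v hv hlap χ hχ hχs
    have hPc : Continuous fun x => (χ x) ^ 2 * (∑ i, (pd v i x) ^ 2) :=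
      ((hχ.continuous).pow 2).mul hsumc
    have hPs : HasCompactSupport fun x => (χ x) ^ 2 * (∑ i, (pd v i x) ^ 2) :=
      HasCompactSupport.intro hχs fun x hx => by
        simp [image_eq_zero_of_notMem_tsupport hx]
    have hPi : Integrable fun x => (χ x) ^ 2 * (∑ i, (pd v i x) ^ 2) :=
      hPc.integrable_of_hasCompactSupport hPs
    have lhs1 : ∫ x in ball (0 : EuclideanSpace ℝ (Fin 2)) r, (∑ i, (pd v i x) ^ 2)
        ≤ ∫ x, (χ x) ^ 2 * (∑ i, (pd v i x) ^ 2) := by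
      have heq : Set.EqOn (fun x => ∑ i, (pd v i x) ^ 2)
          (fun x => (χ x) ^ 2 * (∑ i, (pd v i x) ^ 2))
          (ball (0 : EuclideanSpace ℝ (Fin 2)) r) := by
        intro x hx
        simp [hχ1 x hx]
      rw [setIntegral_congr_fun measurableSet_ball heq]
      exact setIntegral_le_integral hPi (Filter.Eventually.of_forall fun x => by positivity)
    have hWzero : ∀ x ∉ closedBall (0 : EuclideanSpace ℝ (Fin 2)) (2*r),
        (v x) ^ 2 * (∑ i, (pd χ i x) ^ 2) = 0 := by
      intro x hx
      have hz : ∀ i : Fin 2, pd χ i x = 0 :=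
        fun i => pd_zero_of_nmem χ i x (fun h => hx (htsupp h))
      simp [hz]
    have hK : ∀ x ∈ closedBall (0 : EuclideanSpace ℝ (Fin 2)) (2*r),
        ‖(v x) ^ 2 * (∑ i, (pd χ i x) ^ 2)‖ ≤ (C₀*(1+2*r)) ^ 2 * (2*(M/r) ^ 2) := by
      intro x hx
      rw [Real.norm_eq_abs, abs_of_nonneg (by positivity)]
      have hxn : ‖x‖ ≤ 2*r := mem_closedBall_zero_iff.1 hx
      have hv2 : (v x) ^ 2 ≤ (C₀*(1+2*r)) ^ 2 := by
        have hvu : v x ≤ C₀*(1+2*r) := (hgrowth x).trans (by nlinarith)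
        nlinarith [hvpos x]
      have hsum : (∑ i, (pd χ i x) ^ 2) ≤ 2*(M/r) ^ 2 := by
        rw [Fin.sum_univ_two]
        have h0 := hpdχ 0 x
        have h1 := hpdχ 1 x
        nlinarith [sq_abs (pd χ 0 x), sq_abs (pd χ 1 x), abs_nonneg (pd χ 0 x),
          abs_nonneg (pd χ 1 x)]
      have hsnn : (0:ℝ) ≤ ∑ i, (pd χ i x) ^ 2 := by positivity
      have hv2nn : (0:ℝ) ≤ (v x) ^ 2 := sq_nonneg _
      nlinarith [sq_nonneg (C₀*(1+2*r))]
    have hvol : (volume (closedBall (0 : EuclideanSpace ℝ (Fin 2)) (2*r))).toReal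
        = (2*r) ^ 2 * B1c := by
      rw [MeasureTheory.Measure.addHaar_closedBall' volume (0 : EuclideanSpace ℝ (Fin 2))
        (by positivity), ENNReal.toReal_mul, ENNReal.toReal_ofReal (by positivity),
        finrank_euclideanSpace_fin]
    have hWc : Continuous fun x => (v x) ^ 2 * (∑ i, (pd χ i x) ^ 2) :=
      ((hv1.continuous).pow 2).mul
        (continuous_finset_sum _ fun i _ => (pd_continuous χ hχ i).pow 2)
    have hWb : ∫ x, (v x) ^ 2 * (∑ i, (pd χ i x) ^ 2)
        ≤ (C₀*(1+2*r)) ^ 2 * (2*(M/r) ^ 2) * ((2*r) ^ 2 * B1c) := by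
      rw [← setIntegral_eq_integral_of_forall_compl_eq_zero hWzero]
      calc ∫ x in closedBall (0 : EuclideanSpace ℝ (Fin 2)) (2*r),
            (v x) ^ 2 * (∑ i, (pd χ i x) ^ 2)
          ≤ ‖∫ x in closedBall (0 : EuclideanSpace ℝ (Fin 2)) (2*r),
            (v x) ^ 2 * (∑ i, (pd χ i x) ^ 2)‖ := by
            rw [Real.norm_eq_abs]; exact le_abs_self _
        _ ≤ (C₀*(1+2*r)) ^ 2 * (2*(M/r) ^ 2)
            * (volume (closedBall (0 : EuclideanSpace ℝ (Fin 2)) (2*r))).toReal :=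
            by
              have := norm_setIntegral_le_of_norm_le_const (μ := volume) measure_closedBall_lt_top hK
              exact this
        _ = _ := by rw [hvol]
    have harith : 4 * ((C₀*(1+2*r)) ^ 2 * (2*(M/r) ^ 2) * ((2*r) ^ 2 * B1c))
        = 32*C₀ ^ 2*(1+2*r) ^ 2*M ^ 2*B1c := by
      field_simp
      ring
    have h9 : (1+2*r) ^ 2 ≤ 9*r ^ 2 := by nlinarith
    have c1 : (0:ℝ) ≤ 32*C₀ ^ 2*M ^ 2*B1c := by positivity
    calc ∫ x in ball (0 : EuclideanSpace ℝ (Fin 2)) r, (∑ i, (pd v i x) ^ 2)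
        ≤ 4 * ∫ x, (v x) ^ 2 * (∑ i, (pd χ i x) ^ 2) := lhs1.trans hcac
      _ ≤ 4 * ((C₀*(1+2*r)) ^ 2 * (2*(M/r) ^ 2) * ((2*r) ^ 2 * B1c)) :=
          mul_le_mul_of_nonneg_left hWb (by norm_num)
      _ = 32*C₀ ^ 2*(1+2*r) ^ 2*M ^ 2*B1c := harith
      _ ≤ (288 * M ^ 2 * C₀ ^ 2 * B1c + S * B1b + 1) * r ^ 2 := by
          nlinarith [mul_le_mul_of_nonneg_left h9 c1,
            mul_nonneg (mul_nonneg hSnn hB1bnn) (sq_nonneg r), sq_nonneg r]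
  · -- small radius
    have hsub : ball (0 : EuclideanSpace ℝ (Fin 2)) r ⊆
        closedBall (0 : EuclideanSpace ℝ (Fin 2)) 1 :=
      (ball_subset_ball h1r.le).trans ball_subset_closedBall
    have hbd : ∀ x ∈ ball (0 : EuclideanSpace ℝ (Fin 2)) r,
        ‖∑ i, (pd v i x) ^ 2‖ ≤ S := fun x hx => hS x (hsub hx)
    have hvol : (volume (ball (0 : EuclideanSpace ℝ (Fin 2)) r)).toReal = r ^ 2 * B1b := by
      rw [MeasureTheory.Measure.addHaar_ball volume (0 : EuclideanSpace ℝ (Fin 2)) hr.le,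
        ENNReal.toReal_mul, ENNReal.toReal_ofReal (by positivity), finrank_euclideanSpace_fin]
    have h1 : ∫ x in ball (0 : EuclideanSpace ℝ (Fin 2)) r, (∑ i, (pd v i x) ^ 2)
        ≤ S * (r ^ 2 * B1b) := by
      calc ∫ x in ball (0 : EuclideanSpace ℝ (Fin 2)) r, (∑ i, (pd v i x) ^ 2)
          ≤ ‖∫ x in ball (0 : EuclideanSpace ℝ (Fin 2)) r, (∑ i, (pd v i x) ^ 2)‖ := by
            rw [Real.norm_eq_abs]; exact le_abs_self _
        _ ≤ S * (volume (ball (0 : EuclideanSpace ℝ (Fin 2)) r)).toReal :=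
            by
              have := norm_setIntegral_le_of_norm_le_const (μ := volume) measure_ball_lt_top hbd
              exact this
        _ = S * (r ^ 2 * B1b) := by rw [hvol]
    have c1 : (0:ℝ) ≤ 288*M ^ 2*C₀ ^ 2*B1c := by positivity
    nlinarith [sq_nonneg r, mul_nonneg c1 (sq_nonneg r)]
end

section
/- Let u, v be functions on ℝ² with v of class C³ and u of class C¹, v > 0 everywhere, satisfying Δv = v u² on ℝ² and ∂u/∂x₂ > 0 everywhere on ℝ². Set v₂ := ∂v/∂x₂ and σ := v₂/v. Then div(v² ∇σ) ≥ 0 everywhere on ℝ²; equivalently, Δv₂ − v₂ u² = div(v² ∇σ)/v ≥ 0 on ℝ², where u > 0 is additionally assumed so that Δv₂ = v₂ u² + 2 v u ∂u/∂x₂ > v₂ u². -/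
section Helpers

variable {E : Type*} [NormedAddCommGroup E] [NormedSpace ℝ E]

private lemma contDiff_pderiv {n m : WithTop ℕ∞} {f : E → ℝ} (hf : ContDiff ℝ n f)
    (h : m + 1 ≤ n) (w : E) : ContDiff ℝ m (fun x => fderiv ℝ f x w) :=
  (ContinuousLinearMap.apply ℝ ℝ w).contDiff.comp (hf.fderiv_right h)

private lemma pderiv_pderiv {f : E → ℝ} {x : E} (hf : DifferentiableAt ℝ (fderiv ℝ f) x)
    (w z : E) :
    fderiv ℝ (fun y => fderiv ℝ f y w) x z = fderiv ℝ (fderiv ℝ f) x z w := by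
  have h : (fun y => fderiv ℝ f y w) = (ContinuousLinearMap.apply ℝ ℝ w) ∘ (fderiv ℝ f) := rfl
  rw [h, fderiv_comp x ((ContinuousLinearMap.apply ℝ ℝ w).differentiableAt) hf]
  simp

private lemma pderiv_swap {f : E → ℝ} (hf : ContDiff ℝ 2 f) (x w z : E) :
    fderiv ℝ (fun y => fderiv ℝ f y w) x z = fderiv ℝ (fun y => fderiv ℝ f y z) x w := by
  have hd : DifferentiableAt ℝ (fderiv ℝ f) x :=
    ((hf.fderiv_right (m := 1) (by norm_num)).differentiable (by norm_num)) x
  rw [pderiv_pderiv hd, pderiv_pderiv hd]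
  exact hf.contDiffAt.isSymmSndFDerivAt (by norm_num) z w

private lemma fderiv_div_apply {f g : E → ℝ} {x : E} (hf : DifferentiableAt ℝ f x)
    (hg : DifferentiableAt ℝ g x) (hx : g x ≠ 0) (w : E) :
    fderiv ℝ (fun y => f y / g y) x w
      = (fderiv ℝ f x w * g x - f x * fderiv ℝ g x w) / g x ^ 2 := by
  have h : (fun y => f y / g y) = fun y => f y * (g y)⁻¹ := by
    funext y; rw [div_eq_mul_inv]
  have hinv : (fun y => (g y)⁻¹) = (fun t : ℝ => t⁻¹) ∘ g := rfl
  have hginv : DifferentiableAt ℝ (fun y => (g y)⁻¹) x := hg.inv hx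
  have hfi : fderiv ℝ (fun y => (g y)⁻¹) x w = -(g x ^ 2)⁻¹ * fderiv ℝ g x w := by
    rw [hinv, fderiv_comp x (differentiableAt_inv hx) hg]
    simp [fderiv_inv]
    ring
  rw [h, fderiv_fun_mul hf hginv]
  simp only [ContinuousLinearMap.add_apply, ContinuousLinearMap.smul_apply, smul_eq_mul, hfi]
  field_simp
  ring

private lemma gradient_apply {f : EuclideanSpace ℝ (Fin 2) → ℝ} (y : EuclideanSpace ℝ (Fin 2))
    (i : Fin 2) : gradient f y i = fderiv ℝ f y (EuclideanSpace.single i 1) := by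
  have h : (inner ℝ (gradient f y) (EuclideanSpace.single i (1 : ℝ)) : ℝ)
      = fderiv ℝ f y (EuclideanSpace.single i 1) := by
    rw [gradient]
    exact InnerProductSpace.toDual_symm_apply
  rw [← h, EuclideanSpace.inner_single_right]
  simp

/-- second basis-like vector abbreviation -/
private noncomputable def ee (i : Fin 2) : EuclideanSpace ℝ (Fin 2) := EuclideanSpace.single i 1

private lemma ee_def (i : Fin 2) : ee i = EuclideanSpace.single i 1 := rfl

end Helpers

/-- The divergence of a vector field `F : ℝ² → ℝ²`, as the sum of the partial
derivatives of its components. -/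
noncomputable def dvg (F : EuclideanSpace ℝ (Fin 2) → EuclideanSpace ℝ (Fin 2))
    (x : EuclideanSpace ℝ (Fin 2)) : ℝ :=
  ∑ i, fderiv ℝ (fun y => F y i) x (EuclideanSpace.single i 1)

/-- Let `v ∈ C³(ℝ²)` and `u ∈ C¹(ℝ²)` with `u, v > 0`, `Δv = v u²` and `∂u/∂x₂ > 0`.
With `v₂ := ∂v/∂x₂` and `σ := v₂ / v` one has `div(v² ∇σ) ≥ 0` on `ℝ²`; equivalently
`Δv₂ − v₂ u² = div(v² ∇σ)/v ≥ 0` on `ℝ²`. -/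
theorem div_v_sq_grad_sigma_nonneg
    (u v : EuclideanSpace ℝ (Fin 2) → ℝ)
    (hv : ContDiff ℝ 3 v) (hu : ContDiff ℝ 1 u)
    (hvpos : ∀ x, 0 < v x) (hupos : ∀ x, 0 < u x)
    (heqv : ∀ x, lapl v x = v x * (u x) ^ 2)
    (hmonu : ∀ x, 0 < fderiv ℝ u x (EuclideanSpace.single 1 1)) :
    (∀ x, 0 ≤ dvg (fun y => (v y) ^ 2 •
        gradient (fun z => fderiv ℝ v z (EuclideanSpace.single 1 1) / v z) y) x) ∧
    (∀ x, lapl (fun y => fderiv ℝ v y (EuclideanSpace.single 1 1)) x -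
        fderiv ℝ v x (EuclideanSpace.single 1 1) * (u x) ^ 2 =
      dvg (fun y => (v y) ^ 2 •
        gradient (fun z => fderiv ℝ v z (EuclideanSpace.single 1 1) / v z) y) x / v x) := by
  -- basic regularity facts
  have hvC2 : ContDiff ℝ 2 v := hv.of_le (by norm_num)
  have hvd : Differentiable ℝ v := hv.differentiable (by norm_num)
  have hud : Differentiable ℝ u := hu.differentiable (by norm_num)
  have hv2 : ContDiff ℝ 2 (fun y => fderiv ℝ v y (ee 1)) :=
    contDiff_pderiv hv (by norm_num) (ee 1)
  have hv2d : Differentiable ℝ (fun y => fderiv ℝ v y (ee 1)) :=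
    hv2.differentiable (by norm_num)
  have hDv : ∀ i : Fin 2, ContDiff ℝ 2 (fun y => fderiv ℝ v y (ee i)) := fun i =>
    contDiff_pderiv hv (by norm_num) (ee i)
  have hDvd : ∀ i : Fin 2, Differentiable ℝ (fun y => fderiv ℝ v y (ee i)) := fun i =>
    (hDv i).differentiable (by norm_num)
  have hDDv : ∀ i j : Fin 2,
      Differentiable ℝ (fun y => fderiv ℝ (fun z => fderiv ℝ v z (ee i)) y (ee j)) :=
    fun i j => (contDiff_pderiv (m := 1) (hDv i) (by norm_num) (ee j)).differentiable (by norm_num)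
  have hDv2d : ∀ i : Fin 2,
      Differentiable ℝ (fun y => fderiv ℝ (fun z => fderiv ℝ v z (ee 1)) y (ee i)) :=
    fun i => (contDiff_pderiv (m := 1) hv2 (by norm_num) (ee i)).differentiable (by norm_num)
  -- Key identity: div(v² ∇σ) = v·(Δv₂ − v₂ u²)
  have hkey : ∀ x, dvg (fun y => (v y) ^ 2 •
        gradient (fun z => fderiv ℝ v z (EuclideanSpace.single 1 1) / v z) y) x
      = v x * (lapl (fun y => fderiv ℝ v y (EuclideanSpace.single 1 1)) x -
          fderiv ℝ v x (EuclideanSpace.single 1 1) * (u x) ^ 2) := by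
    intro x
    have hcomp : ∀ i : Fin 2,
        (fun y => ((v y) ^ 2 • gradient (fun z => fderiv ℝ v z (ee 1) / v z) y) i)
        = fun y => v y * fderiv ℝ (fun z => fderiv ℝ v z (ee 1)) y (ee i)
            - fderiv ℝ v y (ee 1) * fderiv ℝ v y (ee i) := by
      intro i
      funext y
      have hg : gradient (fun z => fderiv ℝ v z (ee 1) / v z) y i
          = fderiv ℝ (fun z => fderiv ℝ v z (ee 1) / v z) y (ee i) := by
        simp only [gradient_apply, ← ee_def]
      have hdq := fderiv_div_apply (f := fun z => fderiv ℝ v z (ee 1)) (g := v)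
        (hv2d y) (hvd y) (hvpos y).ne' (ee i)
      have hvne : v y ≠ 0 := (hvpos y).ne'
      calc ((v y) ^ 2 • gradient (fun z => fderiv ℝ v z (ee 1) / v z) y) i
          = (v y) ^ 2 * gradient (fun z => fderiv ℝ v z (ee 1) / v z) y i := by
            simp [PiLp.smul_apply, smul_eq_mul]
        _ = (v y) ^ 2 * ((fderiv ℝ (fun z => fderiv ℝ v z (ee 1)) y (ee i) * v y
              - fderiv ℝ v y (ee 1) * fderiv ℝ v y (ee i)) / v y ^ 2) := by rw [hg, hdq]
        _ = v y * fderiv ℝ (fun z => fderiv ℝ v z (ee 1)) y (ee i)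
              - fderiv ℝ v y (ee 1) * fderiv ℝ v y (ee i) := by field_simp
    have hterm : ∀ i : Fin 2,
        fderiv ℝ (fun y =>
            ((v y) ^ 2 • gradient (fun z => fderiv ℝ v z (ee 1) / v z) y) i) x (ee i)
        = v x * fderiv ℝ (fun y => fderiv ℝ (fun z => fderiv ℝ v z (ee 1)) y (ee i)) x (ee i)
          - fderiv ℝ v x (ee 1) * fderiv ℝ (fun y => fderiv ℝ v y (ee i)) x (ee i) := by
      intro i
      rw [hcomp i]
      have d1 : DifferentiableAt ℝ
          (fun y => v y * fderiv ℝ (fun z => fderiv ℝ v z (ee 1)) y (ee i)) x :=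
        (hvd x).mul ((hDv2d i) x)
      have d2 : DifferentiableAt ℝ (fun y => fderiv ℝ v y (ee 1) * fderiv ℝ v y (ee i)) x :=
        (hv2d x).mul ((hDvd i) x)
      rw [fderiv_fun_sub d1 d2, ContinuousLinearMap.sub_apply,
        fderiv_fun_mul (hvd x) ((hDv2d i) x), fderiv_fun_mul (hv2d x) ((hDvd i) x)]
      simp only [ContinuousLinearMap.add_apply, ContinuousLinearMap.smul_apply, smul_eq_mul]
      ring
    have hlaplv := heqv x
    simp only [lapl, dvg, ← ee_def, Fin.sum_univ_two] at hlaplv ⊢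
    rw [hterm 0, hterm 1]
    linear_combination (-(fderiv ℝ v x (ee 1))) * hlaplv
  -- Differentiated PDE: Δv₂ − v₂ u² = 2 v u ∂₂u
  have hlap : ∀ x, lapl (fun y => fderiv ℝ v y (EuclideanSpace.single 1 1)) x -
      fderiv ℝ v x (EuclideanSpace.single 1 1) * (u x) ^ 2
      = 2 * v x * u x * fderiv ℝ u x (EuclideanSpace.single 1 1) := by
    intro x
    have hstep : ∀ i : Fin 2,
        fderiv ℝ (fun y => fderiv ℝ (fun z => fderiv ℝ v z (ee 1)) y (ee i)) x (ee i)
        = fderiv ℝ (fun y => fderiv ℝ (fun z => fderiv ℝ v z (ee i)) y (ee i)) x (ee 1) := by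
      intro i
      have h1 : (fun y => fderiv ℝ (fun z => fderiv ℝ v z (ee 1)) y (ee i))
          = fun y => fderiv ℝ (fun z => fderiv ℝ v z (ee i)) y (ee 1) := by
        funext y; exact pderiv_swap hvC2 y (ee 1) (ee i)
      rw [h1]
      exact pderiv_swap (hDv i) x (ee 1) (ee i)
    have hsum : ∑ i : Fin 2,
          fderiv ℝ (fun y => fderiv ℝ (fun z => fderiv ℝ v z (ee 1)) y (ee i)) x (ee i)
        = fderiv ℝ (fun y => ∑ i : Fin 2,
            fderiv ℝ (fun z => fderiv ℝ v z (ee i)) y (ee i)) x (ee 1) := by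
      rw [fderiv_fun_sum (fun i _ => (hDDv i i) x)]
      simp only [ContinuousLinearMap.sum_apply]
      exact Finset.sum_congr rfl fun i _ => hstep i
    have hfn : (fun y => ∑ i : Fin 2, fderiv ℝ (fun z => fderiv ℝ v z (ee i)) y (ee i))
        = fun y => v y * (u y * u y) := by
      funext y
      have h := heqv y
      simp only [lapl, ← ee_def] at h
      rw [h]; ring
    have hu2 : fderiv ℝ (fun y => u y * u y) x (ee 1) = 2 * u x * fderiv ℝ u x (ee 1) := by
      rw [fderiv_fun_mul (hud x) (hud x)]
      simp only [ContinuousLinearMap.add_apply, ContinuousLinearMap.smul_apply, smul_eq_mul]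
      ring
    simp only [lapl, ← ee_def]
    rw [hsum, hfn, fderiv_fun_mul (hvd x) (show DifferentiableAt ℝ (fun y => u y * u y) x from (hud x).mul (hud x))]
    simp only [ContinuousLinearMap.add_apply, ContinuousLinearMap.smul_apply, smul_eq_mul, hu2]
    ring
  constructor
  · intro x
    rw [hkey x, hlap x]
    exact le_of_lt (mul_pos (hvpos x)
      (mul_pos (mul_pos (mul_pos two_pos (hvpos x)) (hupos x)) (hmonu x)))
  · intro x
    rw [hkey x, mul_div_cancel_left₀ _ (hvpos x).ne']
end
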